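/- Let g ≥ 2 be an integer, let m ≥ 2, λ ≥ m − 1 ≥ 1, α real with 0 < α ≤ g − m, and set a = (gλ + α)/(1 + λ), b = (gλ + α)/λ. If g^g < a^{g−1}·b, then (m − 1)² < 1 − m/g. -/

import Mathlib

/-- Combination of two steps in the proof of Lemma 7.2. -/
theorem stmt_19 (g m : ℕ) (hg : 2 ≤ g) (hm : 2 ≤ m)
    (lam α : ℝ) (hlam : (m : ℝ) - 1 ≤ lam) (hm1 : 1 ≤ (m : ℝ) - 1)
    (hα : 0 < α) (hαm : α ≤ (g : ℝ) - m)
    (a b : ℝ) (ha : a = ((g : ℝ) * lam + α) / (1 + lam))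
    (hb : b = ((g : ℝ) * lam + α) / lam)
    (h : (g : ℝ) ^ g < a ^ (g - 1) * b) :
    ((m : ℝ) - 1) ^ 2 < 1 - (m : ℝ) / g := by
  have hG2 : (2:ℝ) ≤ (g:ℝ) := by exact_mod_cast hg
  have hGpos : (0:ℝ) < g := by linarith
  have hlampos : 0 < lam := by linarith
  have hnum : 0 < (g : ℝ) * lam + α := by positivity
  have h1l : (0:ℝ) < 1 + lam := by linarith
  have hapos : 0 < a := by rw [ha]; positivity
  have hbpos : 0 < b := by rw [hb]; positivity
  set s : ℝ := (((g:ℝ) - 1) * a + b) / g with hs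
  have hspos : 0 < s := by
    apply div_pos _ hGpos
    nlinarith
  have key : a ^ (g - 1) * b ≤ s ^ g := by
    have hw1 : (0:ℝ) ≤ ((g:ℝ) - 1) / g := by
      apply div_nonneg (by linarith) hGpos.le
    have hw2 : (0:ℝ) ≤ 1 / (g:ℝ) := by positivity
    have hsum : ((g:ℝ) - 1) / g + 1 / g = 1 := by field_simp; ring
    have hgm := Real.geom_mean_le_arith_mean2_weighted hw1 hw2 hapos.le hbpos.le hsum
    have h1 : ((g:ℝ) - 1) / g * a + 1 / g * b = s := by rw [hs]; ring
    rw [h1] at hgm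
    have h2 := Real.rpow_le_rpow (by positivity) hgm hGpos.le
    rw [Real.mul_rpow (Real.rpow_nonneg hapos.le _) (Real.rpow_nonneg hbpos.le _),
      ← Real.rpow_mul hapos.le, ← Real.rpow_mul hbpos.le] at h2
    have e1 : ((g:ℝ) - 1) / g * g = ((g - 1 : ℕ) : ℝ) := by
      have : ((g - 1 : ℕ) : ℝ) = (g:ℝ) - 1 := by
        push_cast [Nat.cast_sub (by omega : 1 ≤ g)]; ring
      rw [this]; field_simp
    have e2 : 1 / (g:ℝ) * g = 1 := by field_simp
    rw [e1, e2, Real.rpow_natCast a, Real.rpow_one, Real.rpow_natCast s] at h2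
    exact h2
  have hlt : (g:ℝ) < s := by
    refine lt_of_pow_lt_pow_left₀ g hspos.le ?_
    calc ((g:ℝ)) ^ g < a ^ (g - 1) * b := h
      _ ≤ s ^ g := key
  have hq : (g:ℝ) ^ 2 < ((g:ℝ) - 1) * a + b := by
    rw [hs, lt_div_iff₀ hGpos] at hlt
    nlinarith
  have ea : a * (1 + lam) = (g:ℝ) * lam + α := by rw [ha]; field_simp
  have eb : b * lam = (g:ℝ) * lam + α := by rw [hb]; field_simp
  have hq2 : (g:ℝ) ^ 2 * (lam * (1 + lam)) <
      ((g:ℝ) - 1) * ((g:ℝ) * lam + α) * lam + ((g:ℝ) * lam + α) * (1 + lam) := by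
    have := mul_lt_mul_of_pos_right hq (mul_pos hlampos h1l)
    nlinarith [ea, eb]
  have key2 : ((m:ℝ) - 1) ^ 2 * g < (g:ℝ) - m := by
    nlinarith [mul_pos hGpos hlampos, mul_nonneg (mul_nonneg hGpos.le hlampos.le) hα.le,
      mul_nonneg (mul_nonneg hGpos.le (by linarith : (0:ℝ) ≤ lam - ((m:ℝ) - 1)))
        (by linarith : (0:ℝ) ≤ (g:ℝ) - 1 - α),
      mul_nonneg (mul_nonneg hGpos.le (by linarith : (0:ℝ) ≤ (m:ℝ) - 1))
        (by linarith : (0:ℝ) ≤ (g:ℝ) - m - α)]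
  rw [show (1:ℝ) - (m:ℝ) / g = ((g:ℝ) - m) / g by field_simp, lt_div_iff₀ hGpos]
  exact key2
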